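/- Let F be a field, V a finite-dimensional F-vector space, q : V → F a non-degenerate quadratic form and a ∈ F. If v₁, v₂, w₁, w₂ ∈ V satisfy w₁ − v₁ ≠ 0, w₂ − v₂ ≠ 0 and q(w₁ − v₁) = q(w₂ − v₂), then the graph distances in the representation graph G_{q,a} satisfy d(v₁, w₁) = d(v₂, w₂) (as elements of ℕ∪{∞}). -/

import Mathlib

open QuadraticMap Module

/-- The representation graph `G_{q,a}`: vertices are the vectors of `V`, and distinct
`x, y` are adjacent iff `q (x - y) = a`. -/
def repGraph {F V : Type*} [Field F] [AddCommGroup V] [Module F V]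
    (q : QuadraticForm F V) (a : F) : SimpleGraph V where
  Adj x y := x ≠ y ∧ q (x - y) = a
  symm := by
    constructor
    rintro x y ⟨hxy, h⟩
    refine ⟨hxy.symm, ?_⟩
    rw [← neg_sub x y, QuadraticMap.map_neg]
    exact h
  loopless := by constructor; rintro x ⟨h, -⟩; exact h rfl

section Aux

variable {F V : Type*} [Field F] [AddCommGroup V] [Module F V]

variable (q : QuadraticForm F V)

private lemma qadd (x y : V) : q (x + y) = q x + q y + polar (⇑q) x y := by
  simp only [polar]; ring

private lemma qsub (x y : V) : q (x - y) = q x + q y - polar (⇑q) x y := by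
  rw [sub_eq_add_neg, qadd, QuadraticMap.map_neg, polar_neg_right]; ring

private lemma qsmul (a : F) (x : V) : q (a • x) = a * a * q x := by
  rw [QuadraticMap.map_smul, smul_eq_mul]

private lemma polarself (x : V) : polar (⇑q) x x = 2 * q x := by
  have h1 := qadd q x x
  have h2 : q (x + x) = 4 * q x := by
    rw [show x + x = (2 : F) • x by module, qsmul]; ring
  linear_combination h2 - h1

private lemma qexp (x y z : V) :
    q (x + y + z) = q x + q y + q z + polar (⇑q) x y + polar (⇑q) x z + polar (⇑q) y z := by
  rw [qadd q (x + y) z, qadd q x y, polar_add_left]; ring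

/-- package an involutive linear map as a linear equivalence -/
private def invEquiv (f : V →ₗ[F] V) (h : ∀ x, f (f x) = x) : V ≃ₗ[F] V :=
  LinearEquiv.ofLinear f f (by ext x; simp [h x]) (by ext x; simp [h x])

@[simp] private lemma invEquiv_apply (f : V →ₗ[F] V) (h : ∀ x, f (f x) = x) (x : V) :
    invEquiv f h x = f x := rfl

/-- the reflection in a vector `v` with `q v ≠ 0` -/
private def reflMap (v : V) : V →ₗ[F] V where
  toFun x := x - ((q v)⁻¹ * polar (⇑q) x v) • v
  map_add' x y := by
    simp only [polar_add_left, smul_eq_mul]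
    match_scalars <;> ring
  map_smul' c x := by
    simp only [polar_smul_left, smul_eq_mul, RingHom.id_apply]
    match_scalars <;> ring

private lemma reflMap_invol (v : V) (hv : q v ≠ 0) : ∀ x, reflMap q v (reflMap q v x) = x := by
  intro x
  simp only [reflMap, LinearMap.coe_mk, AddHom.coe_mk, polar_sub_left, polar_smul_left,
    polarself, smul_eq_mul]
  match_scalars <;> field_simp <;> ring

private lemma reflMap_q (v : V) (hv : q v ≠ 0) (x : V) : q (reflMap q v x) = q x := by
  simp only [reflMap, LinearMap.coe_mk, AddHom.coe_mk]
  rw [sub_eq_add_neg, ← neg_smul, qadd, qsmul, polar_smul_right, smul_eq_mul]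
  field_simp
  ring

/-- the swap-type isometry used in the singular case -/
private def sigMap (p r : V) : V →ₗ[F] V where
  toFun x := x + (q r * polar (⇑q) x p - polar (⇑q) x r) • p - polar (⇑q) x p • r
  map_add' x y := by
    simp only [polar_add_left, smul_eq_mul]
    match_scalars <;> ring
  map_smul' c x := by
    simp only [polar_smul_left, smul_eq_mul, RingHom.id_apply]
    match_scalars <;> ring

private lemma sigMap_invol (p r : V) (hp : q p = 0) (hpr : polar (⇑q) p r = 2) :
    ∀ x, sigMap q p r (sigMap q p r x) = x := by
  intro x
  have hpp : polar (⇑q) p p = 0 := by rw [polarself, hp]; ring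
  have hrp : polar (⇑q) r p = 2 := by rw [polar_comm]; exact hpr
  have hrr : polar (⇑q) r r = 2 * q r := polarself q r
  simp only [sigMap, LinearMap.coe_mk, AddHom.coe_mk, polar_add_left, polar_sub_left,
    polar_smul_left, smul_eq_mul, hpp, hrp, hrr, hpr]
  match_scalars <;> ring

private lemma sigMap_q (p r : V) (hp : q p = 0) (hpr : polar (⇑q) p r = 2) (x : V) :
    q (sigMap q p r x) = q x := by
  simp only [sigMap, LinearMap.coe_mk, AddHom.coe_mk]
  rw [sub_eq_add_neg, ← neg_smul, qexp, qsmul, qsmul, polar_smul_right, polar_smul_right,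
    polar_smul_left, polar_smul_right, hpr, hp, smul_eq_mul, smul_eq_mul, smul_eq_mul,
    smul_eq_mul]
  ring

variable (hnd : ∀ x : V, (∀ y : V, polar (⇑q) x y = 0) → x = 0)
include hnd

private lemma find_z (u w : V) (hind : ∀ s t : F, s • u + t • w = 0 → s = 0 ∧ t = 0) :
    ∃ z, polar (⇑q) u z = 1 ∧ polar (⇑q) w z = 0 := by
  have hw : w ≠ 0 := by
    intro h
    have := (hind 0 1 (by simp [h])).2
    simp at this
  obtain ⟨y, hy⟩ : ∃ y, polar (⇑q) w y ≠ 0 := by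
    by_contra hco; push_neg at hco; exact hw (hnd w hco)
  by_cases hx : ∃ x, polar (⇑q) w x = 0 ∧ polar (⇑q) u x ≠ 0
  · obtain ⟨x, hx0, hx1⟩ := hx
    refine ⟨(polar (⇑q) u x)⁻¹ • x, ?_, ?_⟩
    · rw [polar_smul_right, smul_eq_mul]; field_simp
    · rw [polar_smul_right, smul_eq_mul, hx0, mul_zero]
  · push_neg at hx
    exfalso
    set c : F := polar (⇑q) u y / polar (⇑q) w y with hc
    have hall : ∀ x, polar (⇑q) (u - c • w) x = 0 := by
      intro x
      have h0 : polar (⇑q) w (x - (polar (⇑q) w x / polar (⇑q) w y) • y) = 0 := by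
        rw [polar_sub_right, polar_smul_right, smul_eq_mul]
        field_simp
        ring
      have h1 := hx _ h0
      rw [polar_sub_right, polar_smul_right, smul_eq_mul] at h1
      rw [polar_sub_left, polar_smul_left, smul_eq_mul, hc]
      field_simp at h1 ⊢
      linear_combination h1
    have h0 : u - c • w = 0 := hnd _ hall
    have : (1 : F) = 0 :=
      (hind 1 (-c) (by rw [one_smul, neg_smul, ← sub_eq_add_neg]; exact h0)).1
    simp at this

/-- the key step: if `b` is not a multiple of `a` (or more exactly, under linear independence
obtained from that) and `q a = q b`, there is an isometry taking `a` to `b`. -/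
private lemma step (a b : V) (ha : a ≠ 0) (hi : ∀ c : F, b ≠ c • a) (hq : q a = q b) :
    ∃ f : V ≃ₗ[F] V, (∀ x, q (f x) = q x) ∧ f a = b := by
  by_cases hab : q (a - b) = 0
  · -- independent singular case
    have hind : ∀ s t : F, s • a + t • b = 0 → s = 0 ∧ t = 0 := by
      intro s t hst
      by_cases ht : t = 0
      · subst ht
        rw [zero_smul, add_zero, smul_eq_zero] at hst
        exact ⟨hst.resolve_right ha, rfl⟩
      · exfalso
        apply hi (-(s / t))
        apply smul_right_injective V ht
        show t • b = t • (-(s / t) • a)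
        have h' : t • b = (-s) • a := by
          rw [neg_smul, eq_neg_iff_add_eq_zero, add_comm]; exact hst
        rw [h', smul_smul]
        match_scalars
        field_simp
    have hind' : ∀ s t : F, s • b + t • a = 0 → s = 0 ∧ t = 0 := by
      intro s t hst
      have := hind t s (by rw [add_comm]; exact hst)
      exact ⟨this.2, this.1⟩
    obtain ⟨z₁, hz₁a, hz₁b⟩ := find_z q hnd a b hind
    obtain ⟨z₂, hz₂b, hz₂a⟩ := find_z q hnd b a hind'
    set p := a - b with hpd
    set r := z₁ - z₂ with hrd
    have hqp : q p = 0 := hab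
    have hpr : polar (⇑q) p r = 2 := by
      simp only [hpd, hrd, polar_sub_left, polar_sub_right, hz₁a, hz₁b, hz₂a, hz₂b]
      ring
    have hpab : polar (⇑q) a b = 2 * q a := by
      have h1 := qsub q a b
      rw [← hpd, hqp] at h1
      linear_combination h1 - hq
    have hap : polar (⇑q) a p = 0 := by
      rw [hpd, polar_sub_right, polarself, hpab]; ring
    have har : polar (⇑q) a r = 1 := by
      rw [hrd, polar_sub_right, hz₁a, hz₂a]; ring
    refine ⟨invEquiv (sigMap q p r) (sigMap_invol q p r hqp hpr),
      fun x => sigMap_q q p r hqp hpr x, ?_⟩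
    rw [invEquiv_apply]
    simp only [sigMap, LinearMap.coe_mk, AddHom.coe_mk, hap, har, mul_zero, zero_sub,
      neg_smul, one_smul, zero_smul, sub_zero]
    rw [hpd]
    abel
  · -- reflection case
    set v := a - b with hv
    have hpav : polar (⇑q) a v = q v := by
      have h1 : q v = q a + q b - polar (⇑q) a b := by
        rw [hv, sub_eq_add_neg, qadd, QuadraticMap.map_neg, polar_neg_right]; ring
      rw [hv, polar_sub_right, polarself, h1, hq]; ring
    refine ⟨invEquiv (reflMap q v) (reflMap_invol q v hab), fun x => reflMap_q q v hab x, ?_⟩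
    rw [invEquiv_apply]
    simp only [reflMap, LinearMap.coe_mk, AddHom.coe_mk, hpav]
    rw [inv_mul_cancel₀ hab, one_smul, hv]
    abel

private lemma exists_iso (u₁ u₂ : V) (h1 : u₁ ≠ 0) (h2 : u₂ ≠ 0) (hq : q u₁ = q u₂) :
    ∃ f : V ≃ₗ[F] V, (∀ x, q (f x) = q x) ∧ f u₁ = u₂ := by
  by_cases hc : ∃ c : F, u₂ = c • u₁
  · obtain ⟨c, rfl⟩ := hc
    by_cases hone : c = 1
    · exact ⟨LinearEquiv.refl F V, fun x => rfl, by rw [hone, one_smul]; rfl⟩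
    by_cases hneg : c = -1
    · refine ⟨LinearEquiv.neg F, fun x => by simp, ?_⟩
      simp [LinearEquiv.neg_apply, hneg, neg_smul, one_smul]
    -- now c ≠ ±1, hence q u₁ = 0, and c ≠ 0
    have hc0 : c ≠ 0 := by rintro rfl; rw [zero_smul] at h2; exact h2 rfl
    have hq1 : q u₁ = 0 := by
      rw [qsmul] at hq
      have h0 : (c - 1) * (c + 1) * q u₁ = 0 := by linear_combination -hq
      rcases mul_eq_zero.mp h0 with h | h
      · rcases mul_eq_zero.mp h with h' | h'
        · exact absurd (by linear_combination h') hone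
        · exact absurd (by linear_combination h') hneg
      · exact h
    have hpself : polar (⇑q) u₁ u₁ = 0 := by rw [polarself, hq1]; ring
    -- find z with polar u₁ z = 1 and q z = 0
    obtain ⟨y, hy⟩ : ∃ y, polar (⇑q) u₁ y = 1 := by
      obtain ⟨y0, hy0⟩ : ∃ y, polar (⇑q) u₁ y ≠ 0 := by
        by_contra hco; push_neg at hco; exact h1 (hnd u₁ hco)
      exact ⟨(polar (⇑q) u₁ y0)⁻¹ • y0, by rw [polar_smul_right, smul_eq_mul]; field_simp⟩
    obtain ⟨z, hz1, hzq⟩ : ∃ z, polar (⇑q) u₁ z = 1 ∧ q z = 0 := by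
      refine ⟨y - q y • u₁, ?_, ?_⟩
      · rw [polar_sub_right, polar_smul_right, hy, hpself, smul_eq_mul]; ring
      · rw [qsub, qsmul, polar_smul_right, hq1, polar_comm, hy, smul_eq_mul]; ring
    have hz0 : z ≠ 0 := by
      intro h0; rw [h0, polar_zero_right] at hz1; exact zero_ne_one hz1
    -- step u₁ → z
    obtain ⟨f₁, hf₁q, hf₁⟩ : ∃ f : V ≃ₗ[F] V, (∀ x, q (f x) = q x) ∧ f u₁ = z := by
      refine step q hnd u₁ z h1 ?_ (by rw [hq1, hzq])
      intro d hd
      rw [hd, polar_smul_right, hpself, smul_eq_mul, mul_zero] at hz1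
      exact zero_ne_one hz1
    -- step z → u₂
    obtain ⟨f₂, hf₂q, hf₂⟩ : ∃ f : V ≃ₗ[F] V, (∀ x, q (f x) = q x) ∧ f z = c • u₁ := by
      refine step q hnd z (c • u₁) hz0 ?_ (by rw [hzq, qsmul, hq1]; ring)
      intro d hd
      have h01 : polar (⇑q) u₁ (c • u₁) = 0 := by
        rw [polar_smul_right, hpself, smul_eq_mul, mul_zero]
      rw [hd, polar_smul_right, hz1, smul_eq_mul, mul_one] at h01
      rw [h01, zero_smul] at hd
      exact h2 hd
    exact ⟨f₁.trans f₂, fun x => by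
      rw [LinearEquiv.trans_apply, hf₂q, hf₁q], by
      rw [LinearEquiv.trans_apply, hf₁, hf₂]⟩
  · push_neg at hc
    exact step q hnd u₁ u₂ h1 hc hq

end Aux

private lemma edist_le_of_iso {V W : Type*} {G : SimpleGraph V} {G' : SimpleGraph W}
    (e : G ≃g G') (u v : V) : G'.edist (e u) (e v) ≤ G.edist u v := by
  rw [SimpleGraph.edist_eq_sInf]
  refine le_sInf ?_
  rintro x ⟨w, rfl⟩
  refine le_trans (SimpleGraph.edist_le (w.map e.toHom)) ?_
  rw [SimpleGraph.Walk.length_map]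

private lemma edist_of_iso {V W : Type*} {G : SimpleGraph V} {G' : SimpleGraph W}
    (e : G ≃g G') (u v : V) : G'.edist (e u) (e v) = G.edist u v := by
  refine le_antisymm (edist_le_of_iso e u v) ?_
  have h := edist_le_of_iso e.symm (e u) (e v)
  simpa using h

/-- If `q (w₁ - v₁) = q (w₂ - v₂) ≠ 0`-vectors agree in value, the graph distances in
`G_{q,a}` satisfy `d(v₁, w₁) = d(v₂, w₂)`. -/
theorem stmt_1 {F V : Type*} [Field F] [AddCommGroup V] [Module F V] [FiniteDimensional F V]
    (q : QuadraticForm F V)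
    (hnd : ∀ x : V, (∀ y : V, polar (⇑q) x y = 0) → x = 0)
    (a : F) (v₁ v₂ w₁ w₂ : V)
    (h1 : w₁ - v₁ ≠ 0) (h2 : w₂ - v₂ ≠ 0)
    (h : q (w₁ - v₁) = q (w₂ - v₂)) :
    (repGraph q a).edist v₁ w₁ = (repGraph q a).edist v₂ w₂ := by
  obtain ⟨f, hfq, hfu⟩ := exists_iso q hnd (w₁ - v₁) (w₂ - v₂) h1 h2 h
  let e : V ≃ V :=
    { toFun := fun x => f (x - v₁) + v₂
      invFun := fun y => f.symm (y - v₂) + v₁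
      left_inv := fun x => by simp
      right_inv := fun y => by simp }
  have hdiff : ∀ x y : V, e x - e y = f (x - y) := by
    intro x y
    show f (x - v₁) + v₂ - (f (y - v₁) + v₂) = f (x - y)
    calc f (x - v₁) + v₂ - (f (y - v₁) + v₂) = f (x - v₁) - f (y - v₁) := by abel
      _ = f ((x - v₁) - (y - v₁)) := (_root_.map_sub f _ _).symm
      _ = f (x - y) := by rw [show (x - v₁) - (y - v₁) = x - y by abel]
  have key : ∀ x y : V, (repGraph q a).Adj (e x) (e y) ↔ (repGraph q a).Adj x y := by
    intro x y
    constructor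
    · rintro ⟨hne, hval⟩
      refine ⟨fun hxy => hne (by rw [hxy]), ?_⟩
      rw [hdiff, hfq] at hval
      exact hval
    · rintro ⟨hne, hval⟩
      refine ⟨fun hxy => hne (e.injective hxy), ?_⟩
      rw [hdiff, hfq]
      exact hval
  let g : repGraph q a ≃g repGraph q a := ⟨e, key _ _⟩
  have hgv : g v₁ = v₂ := by
    show f (v₁ - v₁) + v₂ = v₂
    rw [sub_self, map_zero, zero_add]
  have hgw : g w₁ = w₂ := by
    show f (w₁ - v₁) + v₂ = w₂
    rw [hfu]
    abel
  have := edist_of_iso g v₁ w₁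
  rw [hgv, hgw] at this
  exact this.symm
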